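/- Let S* = {x : G(x) = 0} be the (closed, nonempty) stationary set, let x̄ ∈ S*, and suppose ∇²f is Lipschitz continuous with constant L_C on the open ball B(x̄, ε₀). Let x_k ∈ B(x̄, ε₀/2), let H_k = ∇²f(x_k) + ([−λ_min(∇²f(x_k))]₊ + c + μ₁·min{1, ‖G(x_k)‖^δ})·I with c > 0, μ₁ ∈ (0,1], δ ∈ [0,1], and let x̄_k be the exact minimizer of q_k(x) = f(x_k) + ⟨∇f(x_k), x − x_k⟩ + g(x) + (1/2)⟨x − x_k, H_k(x − x_k)⟩. Then ‖x_k − x̄_k‖ ≤ (L_C/(2c))·dist(x_k, S*)² + (1/c)·([−λ_min(∇²f(x_k))]₊ + 2c + μ₁)·dist(x_k, S*). -/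

import Mathlib

open scoped RealInnerProductSpace

private lemma aux_nonneg {A K : ℝ} (h : ∀ t : ℝ, 0 < t → t ≤ 1 → 0 ≤ t * A + t ^ 2 * K) :
    0 ≤ A := by
  rcases le_or_gt K 0 with hK | hK
  · have := h 1 one_pos le_rfl; nlinarith
  · by_contra hA
    push_neg at hA
    have ht0 : 0 < min 1 (-A / (2 * K)) := lt_min one_pos (div_pos (by linarith) (by linarith))
    have h1 := h _ ht0 (min_le_left _ _)
    have h2 : min 1 (-A / (2 * K)) ≤ -A / (2 * K) := min_le_right _ _
    have h3 : min 1 (-A / (2 * K)) * K ≤ (-A / (2 * K)) * K :=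
      mul_le_mul_of_nonneg_right h2 hK.le
    have h4 : (-A / (2 * K)) * K = -A / 2 := by field_simp
    nlinarith

private lemma dir_ineq {E : Type*} [NormedAddCommGroup E] [InnerProductSpace ℝ E]
    {g : E → ℝ} (hg : ConvexOn ℝ Set.univ g) {φ : E → ℝ} {x v : E} {A K : ℝ}
    (hφ : ∀ t : ℝ, φ (x + t • v) = φ x + t * A + t ^ 2 * K)
    (hmin : ∀ u, φ x + g x ≤ φ u + g u) :
    0 ≤ A + (g (x + v) - g x) := by
  apply aux_nonneg (K := K)
  intro t ht0 ht1
  have hcvx : g (x + t • v) ≤ (1 - t) * g x + t * g (x + v) := by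
    have h := hg.2 (Set.mem_univ x) (Set.mem_univ (x + v)) (by linarith : (0:ℝ) ≤ 1 - t)
      ht0.le (by ring)
    have hpt : (1 - t) • x + t • (x + v) = x + t • v := by module
    rw [hpt] at h
    simpa [smul_eq_mul] using h
  have h2 := hmin (x + t • v)
  rw [hφ t] at h2
  nlinarith

private lemma taylor_grad {E F : Type*} [NormedAddCommGroup E] [NormedSpace ℝ E]
    [NormedAddCommGroup F] [NormedSpace ℝ F] [CompleteSpace F]
    {φ : E → F} {Φ : E → (E →L[ℝ] F)} (x y : E) (L : ℝ) (hL : 0 ≤ L)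
    (hΦ : ∀ t ∈ Set.Icc (0:ℝ) 1, HasFDerivAt φ (Φ (x + t • (y - x))) (x + t • (y - x)))
    (hlip : ∀ t ∈ Set.Icc (0:ℝ) 1, ∀ s ∈ Set.Icc (0:ℝ) 1,
      ‖Φ (x + t • (y - x)) - Φ (x + s • (y - x))‖ ≤ L * (|t - s| * ‖y - x‖)) :
    ‖φ y - φ x - Φ x (y - x)‖ ≤ L / 2 * ‖y - x‖ ^ 2 := by
  set a := y - x with ha
  set γ : ℝ → F := fun t => φ (x + t • a) with hγ
  set ψ : ℝ → F := fun t => Φ (x + t • a) a with hψ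
  have huIcc : Set.uIcc (0:ℝ) 1 = Set.Icc (0:ℝ) 1 := Set.uIcc_of_le zero_le_one
  have hd : ∀ t ∈ Set.Icc (0:ℝ) 1, HasDerivAt γ (ψ t) t := by
    intro t ht
    have hline : HasDerivAt (fun t : ℝ => x + t • a) a t := by
      simpa using ((hasDerivAt_id t).smul_const a).const_add x
    exact (hΦ t ht).comp_hasDerivAt t hline
  have hcont : ContinuousOn (fun t => Φ (x + t • a)) (Set.Icc (0:ℝ) 1) := by
    apply LipschitzOnWith.continuousOn (K := Real.toNNReal (L * ‖a‖))
    apply LipschitzOnWith.of_dist_le'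
    intro t ht s hs
    have h := hlip t ht s hs
    rw [dist_eq_norm, Real.dist_eq]
    calc ‖Φ (x + t • a) - Φ (x + s • a)‖ ≤ L * (|t - s| * ‖a‖) := h
      _ = L * ‖a‖ * |t - s| := by ring
  have hψcont : ContinuousOn ψ (Set.Icc (0:ℝ) 1) := hcont.clm_apply continuousOn_const
  have hint : IntervalIntegrable ψ MeasureTheory.volume 0 1 :=
    (hψcont.mono (by rw [huIcc])).intervalIntegrable
  have h1 : ∫ t in (0:ℝ)..1, ψ t = γ 1 - γ 0 :=
    intervalIntegral.integral_eq_sub_of_hasDerivAt (fun t ht => hd t (huIcc ▸ ht)) hint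
  have hγ1 : γ 1 = φ y := by simp [hγ, ha]
  have hγ0 : γ 0 = φ x := by simp [hγ]
  have h2 : φ y - φ x - Φ x a = ∫ t in (0:ℝ)..1, (ψ t - Φ x a) := by
    rw [intervalIntegral.integral_sub hint intervalIntegrable_const, h1,
      intervalIntegral.integral_const, hγ1, hγ0]
    simp
  have hbound : ∀ t ∈ Set.Icc (0:ℝ) 1, ‖ψ t - Φ x a‖ ≤ L * ‖a‖ ^ 2 * t := by
    intro t ht
    have hl := hlip t ht 0 (by constructor <;> norm_num)
    rw [sub_zero, abs_of_nonneg ht.1] at hl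
    calc ‖ψ t - Φ x a‖ = ‖(Φ (x + t • a) - Φ (x + (0:ℝ) • a)) a‖ := by
          simp [hψ, ContinuousLinearMap.sub_apply]
      _ ≤ ‖Φ (x + t • a) - Φ (x + (0:ℝ) • a)‖ * ‖a‖ := ContinuousLinearMap.le_opNorm _ _
      _ ≤ L * (t * ‖a‖) * ‖a‖ := by
          apply mul_le_mul_of_nonneg_right _ (norm_nonneg _)
          simpa using hl
      _ = L * ‖a‖ ^ 2 * t := by ring
  have h3 : ‖∫ t in (0:ℝ)..1, (ψ t - Φ x a)‖ ≤ |∫ t in (0:ℝ)..1, L * ‖a‖ ^ 2 * t| := by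
    apply intervalIntegral.norm_integral_le_abs_of_norm_le
    · filter_upwards [MeasureTheory.ae_restrict_mem measurableSet_uIoc] with t ht
      rw [Set.uIoc_of_le (zero_le_one (α := ℝ))] at ht
      exact hbound t ⟨ht.1.le, ht.2⟩
    · apply ContinuousOn.intervalIntegrable
      exact (continuous_const.mul continuous_id).continuousOn
  have h4 : ∫ t in (0:ℝ)..1, L * ‖a‖ ^ 2 * t = L * ‖a‖ ^ 2 / 2 := by
    rw [intervalIntegral.integral_const_mul, integral_id]
    ring
  rw [h2]
  calc ‖∫ t in (0:ℝ)..1, (ψ t - Φ x a)‖ ≤ |L * ‖a‖ ^ 2 / 2| := h4 ▸ h3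
    _ = L / 2 * ‖a‖ ^ 2 := by rw [abs_of_nonneg (by positivity)]; ring

private lemma hess_symm {n : ℕ} (f : EuclideanSpace ℝ (Fin n) → ℝ) (hf : ContDiff ℝ 2 f)
    (Hess : EuclideanSpace ℝ (Fin n) → (EuclideanSpace ℝ (Fin n) →L[ℝ] EuclideanSpace ℝ (Fin n)))
    (hHess : ∀ y, HasFDerivAt (gradient f) (Hess y) y)
    (xk : EuclideanSpace ℝ (Fin n)) :
    ∀ u v, ⟪u, Hess xk v⟫ = ⟪v, Hess xk u⟫ := by
  have hdf : ∀ y, HasFDerivAt f (fderiv ℝ f y) y := fun y =>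
    ((hf.differentiable (by norm_num)) y).hasFDerivAt
  have hg1 : ContDiff ℝ 1 (fderiv ℝ f) := hf.fderiv_right (by norm_num)
  have hg'' : HasFDerivAt (fderiv ℝ f) (fderiv ℝ (fderiv ℝ f) xk) xk :=
    ((hg1.differentiable (by norm_num)) xk).hasFDerivAt
  set f'' := fderiv ℝ (fderiv ℝ f) xk with hf''
  have hsym0 : ∀ v w, f'' v w = f'' w v := second_derivative_symmetric hdf hg''
  have hrel : ∀ u v, ⟪v, Hess xk u⟫ = f'' u v := by
    intro u v
    have hA : HasFDerivAt (fun y => ⟪v, gradient f y⟫)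
        ((innerSL ℝ v).comp (Hess xk)) xk :=
      (innerSL ℝ v).hasFDerivAt.comp xk (hHess xk)
    have heq : (fun y => ⟪v, gradient f y⟫) = fun y => fderiv ℝ f y v := by
      funext y
      rw [real_inner_comm]
      exact InnerProductSpace.toDual_symm_apply
    rw [heq] at hA
    have hB : HasFDerivAt (fun y => fderiv ℝ f y v)
        ((ContinuousLinearMap.apply ℝ ℝ v).comp f'') xk :=
      (ContinuousLinearMap.apply ℝ ℝ v).hasFDerivAt.comp xk hg''
    have huniq := hA.unique hB
    calc ⟪v, Hess xk u⟫ = ((innerSL ℝ v).comp (Hess xk)) u := rfl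
      _ = ((ContinuousLinearMap.apply ℝ ℝ v).comp f'') u := by rw [huniq]
      _ = f'' u v := rfl
  intro u v
  rw [hrel v u, hrel u v, hsym0]

set_option maxHeartbeats 1000000 in
/-- Lemma 4.3 of the paper: bound on `‖x_k − x̄_k‖` in terms of `dist(x_k, S*)`. -/
theorem stmt11 {n : ℕ}
    (f g : EuclideanSpace ℝ (Fin n) → ℝ)
    (hf : ContDiff ℝ 2 f)
    (hg : ConvexOn ℝ Set.univ g) (hgc : Continuous g)
    (proxg : EuclideanSpace ℝ (Fin n) → EuclideanSpace ℝ (Fin n))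
    (hprox : ∀ y, IsMinOn (fun u => g u + (1 / 2) * ‖u - y‖ ^ 2) Set.univ (proxg y))
    (hproxU : ∀ y u, IsMinOn (fun u => g u + (1 / 2) * ‖u - y‖ ^ 2) Set.univ u → u = proxg y)
    (G : EuclideanSpace ℝ (Fin n) → EuclideanSpace ℝ (Fin n))
    (hG : ∀ y, G y = y - proxg (y - gradient f y))
    (Hess : EuclideanSpace ℝ (Fin n) → (EuclideanSpace ℝ (Fin n) →L[ℝ] EuclideanSpace ℝ (Fin n)))
    (hHess : ∀ y, HasFDerivAt (gradient f) (Hess y) y)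
    (xbar : EuclideanSpace ℝ (Fin n)) (hxbar : G xbar = 0)
    (ε₀ LC : ℝ) (hε₀ : 0 < ε₀) (hLC : 0 ≤ LC)
    (hLip : ∀ u ∈ Metric.ball xbar ε₀, ∀ v ∈ Metric.ball xbar ε₀,
        ‖Hess u - Hess v‖ ≤ LC * ‖u - v‖)
    (xk : EuclideanSpace ℝ (Fin n)) (hxk : xk ∈ Metric.ball xbar (ε₀ / 2))
    (c μ₁ δ : ℝ) (hc : 0 < c)
    (hμ₁ : μ₁ ∈ Set.Ioc (0 : ℝ) 1) (hδ : δ ∈ Set.Icc (0 : ℝ) 1)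
    (lam : ℝ) (hlam : IsGreatest {t : ℝ | ∀ v, t * ‖v‖ ^ 2 ≤ ⟪v, Hess xk v⟫} lam)
    (H : EuclideanSpace ℝ (Fin n) →L[ℝ] EuclideanSpace ℝ (Fin n))
    (hH : H = Hess xk + (max (-lam) 0 + c + μ₁ * min 1 (‖G xk‖ ^ δ))
        • ContinuousLinearMap.id ℝ (EuclideanSpace ℝ (Fin n)))
    (xbark : EuclideanSpace ℝ (Fin n))
    (hxbark : IsMinOn (fun y => f xk + ⟪gradient f xk, y - xk⟫ + g y
        + (1 / 2) * ⟪y - xk, H (y - xk)⟫) Set.univ xbark) :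
    ‖xk - xbark‖ ≤ (LC / (2 * c)) * Metric.infDist xk {y : EuclideanSpace ℝ (Fin n) | G y = 0} ^ 2
      + (1 / c) * (max (-lam) 0 + 2 * c + μ₁) * Metric.infDist xk {y : EuclideanSpace ℝ (Fin n) | G y = 0} := by
  set S : Set (EuclideanSpace ℝ (Fin n)) := {y : EuclideanSpace ℝ (Fin n) | G y = 0} with hSdef
  have hSmem : xbar ∈ S := hxbar
  have hSne : S.Nonempty := ⟨xbar, hSmem⟩
  set M : ℝ := max (-lam) 0 with hMdef
  set s : ℝ := M + c + μ₁ * min 1 (‖G xk‖ ^ δ) with hsdef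
  have hmin0 : 0 ≤ min 1 (‖G xk‖ ^ δ) := le_min zero_le_one (Real.rpow_nonneg (norm_nonneg _) δ)
  have hM0 : 0 ≤ M := le_max_right _ _
  have hμ0 : 0 < μ₁ := hμ₁.1
  have hs_pos : 0 < s := by nlinarith [mul_nonneg hμ0.le hmin0]
  have hs_le : s + c ≤ M + 2 * c + μ₁ := by
    have h1 : μ₁ * min 1 (‖G xk‖ ^ δ) ≤ μ₁ * 1 :=
      mul_le_mul_of_nonneg_left (min_le_left _ _) hμ0.le
    nlinarith
  have hsymHess := hess_symm f hf Hess hHess xk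
  have hsymH : ∀ u v, ⟪u, H v⟫ = ⟪v, H u⟫ := by
    intro u v
    rw [hH]
    simp only [ContinuousLinearMap.add_apply, ContinuousLinearMap.coe_smul',
      Pi.smul_apply, ContinuousLinearMap.id_apply, inner_add_right,
      real_inner_smul_right]
    rw [hsymHess u v, real_inner_comm u v]
  have hcoer : ∀ v, c * ‖v‖ ^ 2 ≤ ⟪v, H v⟫ := by
    intro v
    have h1 := hlam.1 v
    have h2 : ⟪v, H v⟫ = ⟪v, Hess xk v⟫ + s * ‖v‖ ^ 2 := by
      rw [hH]
      simp only [ContinuousLinearMap.add_apply, ContinuousLinearMap.coe_smul',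
        Pi.smul_apply, ContinuousLinearMap.id_apply, inner_add_right,
        real_inner_smul_right, real_inner_self_eq_norm_sq]
    have h3 : -lam ≤ M := le_max_left _ _
    have h4 : 0 ≤ μ₁ * min 1 (‖G xk‖ ^ δ) := mul_nonneg hμ0.le hmin0
    nlinarith [sq_nonneg ‖v‖]
  -- key estimate for any stationary point in the ball
  have key : ∀ xh, G xh = 0 → ‖xh - xbar‖ < ε₀ →
      c * ‖xh - xbark‖ ≤ LC / 2 * ‖xh - xk‖ ^ 2 + s * ‖xh - xk‖ := by
    intro xh hxhS hxhball
    have hxkball : ‖xk - xbar‖ < ε₀ / 2 := by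
      rw [Metric.mem_ball, dist_eq_norm] at hxk; exact hxk
    have hmemball : ∀ t ∈ Set.Icc (0:ℝ) 1, xk + t • (xh - xk) ∈ Metric.ball xbar ε₀ := by
      intro t ht
      rw [Metric.mem_ball, dist_eq_norm]
      have heq : xk + t • (xh - xk) - xbar = (1 - t) • (xk - xbar) + t • (xh - xbar) := by
        module
      rw [heq]
      have h1 : ‖(1 - t) • (xk - xbar) + t • (xh - xbar)‖
          ≤ (1 - t) * ‖xk - xbar‖ + t * ‖xh - xbar‖ := by
        refine (norm_add_le _ _).trans ?_
        rw [norm_smul, norm_smul, Real.norm_eq_abs, Real.norm_eq_abs,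
          abs_of_nonneg (by linarith [ht.2] : (0:ℝ) ≤ 1 - t), abs_of_nonneg ht.1]
      nlinarith [ht.1, ht.2, norm_nonneg (xk - xbar), norm_nonneg (xh - xbar)]
    have hlip2 : ∀ t ∈ Set.Icc (0:ℝ) 1, ∀ s' ∈ Set.Icc (0:ℝ) 1,
        ‖Hess (xk + t • (xh - xk)) - Hess (xk + s' • (xh - xk))‖
          ≤ LC * (|t - s'| * ‖xh - xk‖) := by
      intro t ht s' hs'
      have h1 := hLip _ (hmemball t ht) _ (hmemball s' hs')
      calc ‖Hess (xk + t • (xh - xk)) - Hess (xk + s' • (xh - xk))‖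
          ≤ LC * ‖(xk + t • (xh - xk)) - (xk + s' • (xh - xk))‖ := h1
        _ = LC * (|t - s'| * ‖xh - xk‖) := by
            rw [show (xk + t • (xh - xk)) - (xk + s' • (xh - xk))
                = (t - s') • (xh - xk) by module, norm_smul, Real.norm_eq_abs]
    have htaylor : ‖gradient f xh - gradient f xk - Hess xk (xh - xk)‖
        ≤ LC / 2 * ‖xh - xk‖ ^ 2 :=
      taylor_grad (φ := gradient f) (Φ := Hess) xk xh LC hLC
        (fun t _ => hHess _) hlip2
    -- optimality of the prox at the stationary point xh
    have hproxeq : proxg (xh - gradient f xh) = xh := by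
      have h := hG xh
      rw [hxhS] at h
      exact (sub_eq_zero.mp h.symm).symm
    have hB : 0 ≤ ⟪gradient f xh, xbark - xh⟫ + (g xbark - g xh) := by
      set Φ2 : EuclideanSpace ℝ (Fin n) → ℝ :=
        fun u => (1/2 : ℝ) * ‖u - (xh - gradient f xh)‖ ^ 2 with hΦ2
      have hmin2 : ∀ u, Φ2 xh + g xh ≤ Φ2 u + g u := by
        intro u
        have h := isMinOn_iff.mp (hprox (xh - gradient f xh)) u (Set.mem_univ u)
        rw [hproxeq] at h
        simp only [hΦ2]
        linarith
      have hφ2 : ∀ t : ℝ, Φ2 (xh + t • (xbark - xh))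
          = Φ2 xh + t * ⟪gradient f xh, xbark - xh⟫
            + t ^ 2 * ((1/2) * ‖xbark - xh‖ ^ 2) := by
        intro t
        simp only [hΦ2]
        rw [show xh + t • (xbark - xh) - (xh - gradient f xh)
            = gradient f xh + t • (xbark - xh) by module]
        rw [show xh - (xh - gradient f xh) = gradient f xh by module]
        rw [norm_add_sq_real, real_inner_smul_right, norm_smul, Real.norm_eq_abs,
          mul_pow, sq_abs]
        ring
      have hres := dir_ineq hg hφ2 hmin2
      rw [show xh + (xbark - xh) = xbark by module] at hres
      linarith
    -- optimality of xbark for the model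
    have hA : 0 ≤ ⟪gradient f xk, xh - xbark⟫
        + ((1/2) * ⟪xh - xbark, H (xbark - xk)⟫ + (1/2) * ⟪xbark - xk, H (xh - xbark)⟫)
        + (g xh - g xbark) := by
      set Φ1 : EuclideanSpace ℝ (Fin n) → ℝ := fun y =>
        ⟪gradient f xk, y - xk⟫ + (1/2 : ℝ) * ⟪y - xk, H (y - xk)⟫ with hΦ1
      have hmin1 : ∀ u, Φ1 xbark + g xbark ≤ Φ1 u + g u := by
        intro u
        have h := isMinOn_iff.mp hxbark u (Set.mem_univ u)
        simp only [hΦ1]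
        linarith
      have hφ1 : ∀ t : ℝ, Φ1 (xbark + t • (xh - xbark))
          = Φ1 xbark + t * (⟪gradient f xk, xh - xbark⟫
              + ((1/2) * ⟪xh - xbark, H (xbark - xk)⟫
                + (1/2) * ⟪xbark - xk, H (xh - xbark)⟫))
            + t ^ 2 * ((1/2) * ⟪xh - xbark, H (xh - xbark)⟫) := by
        intro t
        simp only [hΦ1]
        rw [show xbark + t • (xh - xbark) - xk = (xbark - xk) + t • (xh - xbark) by module]
        simp only [inner_add_right, inner_add_left, map_add, map_smul,
          real_inner_smul_left, real_inner_smul_right]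
        ring
      have hres := dir_ineq hg hφ1 hmin1
      rw [show xbark + (xh - xbark) = xh by module] at hres
      linarith
    -- combine the two optimality conditions
    have hcomb : ⟪xh - xbark, H (xh - xbark)⟫
        ≤ ⟪gradient f xk - gradient f xh + H (xh - xk), xh - xbark⟫ := by
      have hsy : ⟪xbark - xk, H (xh - xbark)⟫ = ⟪xh - xbark, H (xbark - xk)⟫ :=
        hsymH _ _
      have hHb : H (xbark - xk) = H (xh - xk) - H (xh - xbark) := by
        rw [← map_sub]; congr 1; module
      have e1 : ⟪xh - xbark, H (xbark - xk)⟫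
          = ⟪xh - xbark, H (xh - xk)⟫ - ⟪xh - xbark, H (xh - xbark)⟫ := by
        rw [hHb, inner_sub_right]
      have e2 : ⟪xh - xbark, H (xh - xk)⟫ = ⟪H (xh - xk), xh - xbark⟫ :=
        real_inner_comm _ _
      have e3 : ⟪gradient f xh, xbark - xh⟫ = - ⟪gradient f xh, xh - xbark⟫ := by
        rw [show xbark - xh = -(xh - xbark) by module, inner_neg_right]
      have e4 : ⟪gradient f xk - gradient f xh + H (xh - xk), xh - xbark⟫
          = ⟪gradient f xk, xh - xbark⟫ - ⟪gradient f xh, xh - xbark⟫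
            + ⟪H (xh - xk), xh - xbark⟫ := by
        rw [inner_add_left, inner_sub_left]
      linarith
    have hHa : H (xh - xk) = Hess xk (xh - xk) + s • (xh - xk) := by
      rw [hH]
      simp only [ContinuousLinearMap.add_apply, ContinuousLinearMap.coe_smul',
        Pi.smul_apply, ContinuousLinearMap.id_apply]
    have hnormbd : ‖gradient f xk - gradient f xh + H (xh - xk)‖
        ≤ LC / 2 * ‖xh - xk‖ ^ 2 + s * ‖xh - xk‖ := by
      have hrw : gradient f xk - gradient f xh + H (xh - xk)
          = -(gradient f xh - gradient f xk - Hess xk (xh - xk)) + s • (xh - xk) := by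
        rw [hHa]; module
      rw [hrw]
      refine (norm_add_le _ _).trans ?_
      rw [norm_neg, norm_smul, Real.norm_eq_abs, abs_of_nonneg hs_pos.le]
      exact add_le_add htaylor le_rfl
    have hCS : ⟪gradient f xk - gradient f xh + H (xh - xk), xh - xbark⟫
        ≤ ‖gradient f xk - gradient f xh + H (xh - xk)‖ * ‖xh - xbark‖ :=
      real_inner_le_norm _ _
    have hco := hcoer (xh - xbark)
    rcases eq_or_lt_of_le (norm_nonneg (xh - xbark)) with hw0 | hw0
    · rw [← hw0, mul_zero]
      have h0 : 0 ≤ ‖xh - xk‖ := norm_nonneg _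
      nlinarith
    · have h5 : c * ‖xh - xbark‖ ^ 2
          ≤ (LC / 2 * ‖xh - xk‖ ^ 2 + s * ‖xh - xk‖) * ‖xh - xbark‖ := by
        calc c * ‖xh - xbark‖ ^ 2 ≤ ⟪xh - xbark, H (xh - xbark)⟫ := hco
          _ ≤ ⟪gradient f xk - gradient f xh + H (xh - xk), xh - xbark⟫ := hcomb
          _ ≤ ‖gradient f xk - gradient f xh + H (xh - xk)‖ * ‖xh - xbark‖ := hCS
          _ ≤ _ := mul_le_mul_of_nonneg_right hnormbd (norm_nonneg _)
      nlinarith [hw0, h5]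
  -- assemble via approximate nearest stationary points
  set dS := Metric.infDist xk S with hdS
  have hd0 : 0 ≤ dS := Metric.infDist_nonneg
  have hxkball2 : ‖xk - xbar‖ < ε₀ / 2 := by
    rw [Metric.mem_ball, dist_eq_norm] at hxk; exact hxk
  have hdlt : dS < ε₀ / 2 := by
    have h1 : Metric.infDist xk S ≤ dist xk xbar := Metric.infDist_le_dist_of_mem hSmem
    rw [dist_eq_norm] at h1
    rw [hdS]
    linarith
  have main : ∀ r, dS < r → r < ε₀ / 2 → ‖xk - xbark‖
      ≤ LC / (2 * c) * r ^ 2 + 1 / c * (M + 2 * c + μ₁) * r := by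
    intro r hr hr2
    obtain ⟨xh, hxhS, hxhd⟩ := (Metric.infDist_lt_iff hSne).mp hr
    have hdist : ‖xh - xk‖ < r := by
      rw [dist_eq_norm] at hxhd
      rw [norm_sub_rev]
      exact hxhd
    have hball : ‖xh - xbar‖ < ε₀ := by
      have h1 := norm_add_le (xh - xk) (xk - xbar)
      rw [sub_add_sub_cancel] at h1
      linarith
    have hkey := key xh hxhS hball
    have htri : ‖xk - xbark‖ ≤ ‖xh - xk‖ + ‖xh - xbark‖ := by
      have h1 := norm_add_le (xk - xh) (xh - xbark)
      rw [sub_add_sub_cancel] at h1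
      rw [norm_sub_rev xk xh] at h1
      exact h1
    rw [← mul_le_mul_iff_right₀ hc]
    have hrhs : c * (LC / (2 * c) * r ^ 2 + 1 / c * (M + 2 * c + μ₁) * r)
        = LC / 2 * r ^ 2 + (M + 2 * c + μ₁) * r := by
      field_simp
    rw [hrhs]
    have h0t : 0 ≤ ‖xh - xk‖ := norm_nonneg _
    have h0r : 0 ≤ r := le_trans h0t hdist.le
    have hsq : ‖xh - xk‖ ^ 2 ≤ r ^ 2 := pow_le_pow_left₀ h0t hdist.le 2
    have hprod : (s + c) * ‖xh - xk‖ ≤ (M + 2 * c + μ₁) * r :=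
      mul_le_mul hs_le hdist.le h0t (by linarith)
    nlinarith [mul_le_mul_of_nonneg_left hsq (by linarith : (0:ℝ) ≤ LC / 2)]
  have htend : Filter.Tendsto
      (fun r : ℝ => LC / (2 * c) * r ^ 2 + 1 / c * (M + 2 * c + μ₁) * r)
      (nhdsWithin dS (Set.Ioi dS))
      (nhds (LC / (2 * c) * dS ^ 2 + 1 / c * (M + 2 * c + μ₁) * dS)) := by
    apply Filter.Tendsto.mono_left _ nhdsWithin_le_nhds
    exact Continuous.tendsto
      (((continuous_const.mul ((continuous_pow 2))).add
        (continuous_const.mul continuous_id))) dS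
  have hev : ∀ᶠ r in nhdsWithin dS (Set.Ioi dS), ‖xk - xbark‖
      ≤ LC / (2 * c) * r ^ 2 + 1 / c * (M + 2 * c + μ₁) * r := by
    filter_upwards [Ioo_mem_nhdsGT_of_mem ⟨le_refl dS, hdlt⟩] with r hr
    exact main r hr.1 hr.2
  exact ge_of_tendsto htend hev
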